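/- For q ≥ 1/2, the maximum of the doubling index over all (m+1)-colored rooted trees of order at most q equals ⌊log₂(q + 1/2)⌋ + 1: max{𝔡(τ) : τ ∈ T, ρ(τ) ≤ q} = ⌊log₂(q+1/2)⌋ + 1, where m ≥ 1. -/

import Mathlib

inductive CTree (m : ℕ) : Type
  | node : Fin (m + 1) → List (CTree m) → CTree m

namespace CTree

variable {m : ℕ}

def rho : CTree m → ℚ
  | .node l ts => (if (l : ℕ) = 0 then 1 else 1/2) + (ts.attach.map (fun t => rho t.1)).sum
decreasing_by
  all_goals try simp only [CTree.node.sizeOf_spec, List.cons.sizeOf_spec, List.nil.sizeOf_spec]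
  all_goals try have := List.sizeOf_lt_of_mem t.2
  all_goals omega

def height : CTree m → ℕ
  | .node _ ts => 1 + (ts.attach.map (fun t => height t.1)).foldr max 0
decreasing_by
  all_goals try simp only [CTree.node.sizeOf_spec, List.cons.sizeOf_spec, List.nil.sizeOf_spec]
  all_goals try have := List.sizeOf_lt_of_mem t.2
  all_goals omega

def ram : CTree m → ℕ
  | .node _ [] => 1
  | .node _ [t] => ram t
  | .node _ ts => 1 + (ts.attach.map (fun t => ram t.1)).foldr max 0
decreasing_by
  all_goals try simp only [CTree.node.sizeOf_spec, List.cons.sizeOf_spec, List.nil.sizeOf_spec]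
  all_goals try have := List.sizeOf_lt_of_mem t.2
  all_goals omega

def dbl : CTree m → ℕ
  | .node _ [] => 1
  | .node _ ts =>
      let ds := ts.attach.map (fun t => dbl t.1)
      let M := ds.foldr max 0
      if 2 ≤ ds.count M then M + 1 else M
decreasing_by
  all_goals try simp only [CTree.node.sizeOf_spec, List.cons.sizeOf_spec, List.nil.sizeOf_spec]
  all_goals try have := List.sizeOf_lt_of_mem t.2
  all_goals omega


end CTree


namespace CTree
variable {m : ℕ}

theorem myind {P : CTree m → Prop}
    (h : ∀ l ts, (∀ t ∈ ts, P t) → P (node l ts)) : ∀ τ, P τ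
  | .node l ts => h l ts (fun t ht => myind h t)
decreasing_by
  all_goals try simp only [CTree.node.sizeOf_spec, List.cons.sizeOf_spec, List.nil.sizeOf_spec]
  all_goals try have := List.sizeOf_lt_of_mem ht
  all_goals omega

lemma rho_node (l : Fin (m+1)) (ts : List (CTree m)) :
    rho (node l ts) = (if (l : ℕ) = 0 then 1 else 1/2) + (ts.map rho).sum := by
  rw [rho]; simp [List.attach_map_val]

lemma dbl_nil (l : Fin (m+1)) : dbl (node l []) = 1 := by rw [dbl]

lemma dbl_cons (l : Fin (m+1)) (t : CTree m) (ts : List (CTree m)) :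
    dbl (node l (t :: ts)) =
      (if 2 ≤ ((t::ts).map dbl).count (((t::ts).map dbl).foldr max 0)
        then ((t::ts).map dbl).foldr max 0 + 1 else ((t::ts).map dbl).foldr max 0) := by
  rw [dbl]
  simp only [List.attach_map_val]
  congr 1 <;> simp [List.attach_map_val]

lemma le_foldr_max {l : List ℕ} {a : ℕ} (h : a ∈ l) : a ≤ l.foldr max 0 := by
  induction l with
  | nil => simp at h
  | cons b l ih =>
    rcases List.mem_cons.mp h with rfl | h
    · exact le_max_left _ _
    · exact le_trans (ih h) (le_max_right _ _)

lemma foldr_max_mem (l : List ℕ) : l.foldr max 0 = 0 ∨ l.foldr max 0 ∈ l := by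
  induction l with
  | nil => left; rfl
  | cons b l ih =>
    simp only [List.foldr_cons]
    rcases le_total b (l.foldr max 0) with h | h
    · rw [max_eq_right h]
      rcases ih with h0 | hm
      · left; exact h0
      · right; exact List.mem_cons_of_mem _ hm
    · rw [max_eq_left h]; right; exact List.mem_cons_self

lemma half_le_rho : ∀ τ : CTree m, (1/2 : ℚ) ≤ rho τ := by
  refine myind (fun l ts ih => ?_)
  rw [rho_node]
  have hs : (0:ℚ) ≤ (ts.map rho).sum := by
    apply List.sum_nonneg
    intro x hx
    obtain ⟨s, hsm, rfl⟩ := List.mem_map.mp hx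
    linarith [ih s hsm]
  have hw : (1/2 : ℚ) ≤ (if (l : ℕ) = 0 then 1 else 1/2) := by split <;> norm_num
  linarith

lemma one_le_dbl : ∀ τ : CTree m, 1 ≤ dbl τ := by
  refine myind (fun l ts ih => ?_)
  cases ts with
  | nil => rw [dbl_nil]
  | cons t ts =>
    rw [dbl_cons]
    have h1 : 1 ≤ dbl t := ih t (List.mem_cons_self)
    have h2 : dbl t ≤ ((t::ts).map dbl).foldr max 0 :=
      le_foldr_max (by simp)
    split <;> omega

lemma key : ∀ τ : CTree m, (2:ℚ) ^ dbl τ ≤ 2 * rho τ + 1 := by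
  refine myind (fun l ts ih => ?_)
  have hw : (1/2 : ℚ) ≤ (if (l : ℕ) = 0 then 1 else 1/2) := by split <;> norm_num
  cases ts with
  | nil =>
    rw [dbl_nil, rho_node]
    simp only [List.map_nil, List.sum_nil, add_zero]
    nlinarith
  | cons t ts =>
    set L := t :: ts with hL
    set M := (L.map dbl).foldr max 0 with hM
    have hM1 : 1 ≤ M := le_trans (one_le_dbl t) (le_foldr_max (by simp [hL]))
    have hMmem : M ∈ L.map dbl := by
      rcases foldr_max_mem (L.map dbl) with h0 | hm
      · omega
      · exact hm
    have hnn : ∀ x ∈ L.map rho, (0:ℚ) ≤ x := by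
      intro x hx
      obtain ⟨s, _, rfl⟩ := List.mem_map.mp hx
      linarith [half_le_rho s]
    rw [rho_node, dbl_cons]
    rw [← hL, ← hM]
    by_cases hc : 2 ≤ (L.map dbl).count M
    · rw [if_pos hc]
      -- filter
      set F := L.filter (fun s => dbl s == M) with hF
      have hlen : 2 ≤ F.length := by
        rw [hF]
        have : (L.map dbl).count M = L.countP (fun s => dbl s == M) := by
          rw [List.count_eq_countP, List.countP_map]
          rfl
        rw [← List.countP_eq_length_filter]
        omega
      have hFsum : (F.length : ℚ) * ((2^M - 1)/2) ≤ (F.map rho).sum := by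
        have := List.card_nsmul_le_sum (F.map rho) ((2^M - 1)/2) ?_
        · simpa [nsmul_eq_mul] using this
        · intro x hx
          obtain ⟨s, hs, rfl⟩ := List.mem_map.mp hx
          have hsL : s ∈ L := List.mem_of_mem_filter hs
          have hsM : dbl s = M := by
            have := List.of_mem_filter hs
            simpa using this
          have := ih s hsL
          rw [hsM] at this
          linarith
      have hsub : (F.map rho).sum ≤ (L.map rho).sum :=
        List.Sublist.sum_le_sum ((List.filter_sublist).map rho) hnn
      have h2M : (1:ℚ) ≤ 2^M := one_le_pow₀ (by norm_num)
      have hlq : (2:ℚ) ≤ (F.length : ℚ) := by exact_mod_cast hlen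
      have : (2:ℚ) * ((2^M - 1)/2) ≤ (F.length : ℚ) * ((2^M - 1)/2) := by
        apply mul_le_mul_of_nonneg_right hlq
        linarith
      rw [pow_succ]
      nlinarith
    · rw [if_neg hc]
      obtain ⟨s, hsL, hsM⟩ := List.mem_map.mp hMmem
      have hIH := ih s hsL
      rw [hsM] at hIH
      have : rho s ≤ (L.map rho).sum :=
        List.single_le_sum hnn _ (List.mem_map.mpr ⟨s, hsL, rfl⟩)
      linarith

def B (m : ℕ) : ℕ → CTree m
  | 0 => node (Fin.last m) []
  | k+1 => node (Fin.last m) [B m k, B m k]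

lemma rho_B (hm : 1 ≤ m) : ∀ k, rho (B m k) = 2^k - 1/2 := by
  intro k
  induction k with
  | zero =>
    rw [B, rho_node]
    rw [if_neg (by simp [Fin.val_last]; omega)]
    norm_num
  | succ k ih =>
    rw [B, rho_node]
    simp only [List.map_cons, List.map_nil, List.sum_cons, List.sum_nil, add_zero, ih]
    rw [if_neg (by simp [Fin.val_last]; omega)]
    ring

lemma dbl_B : ∀ k, dbl (B m k) = k + 1 := by
  intro k
  induction k with
  | zero => rw [B, dbl_nil]
  | succ k ih =>
    rw [B, dbl_cons]
    simp [ih]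

end CTree

open CTree in
theorem stmt5 (m : ℕ) (hm : 1 ≤ m) (q : ℚ) (hq : 1/2 ≤ q) :
    IsGreatest {k : ℕ | ∃ τ : CTree m, rho τ ≤ q ∧ dbl τ = k}
      ((⌊Real.logb 2 ((q : ℝ) + 1/2)⌋ + 1).toNat) := by
  set n : ℤ := ⌊Real.logb 2 ((q : ℝ) + 1/2)⌋ with hn
  have hx1 : (1:ℝ) ≤ (q:ℝ) + 1/2 := by
    have : ((1/2:ℚ) : ℝ) ≤ (q:ℝ) := by exact_mod_cast hq
    push_cast at this
    linarith
  have hxpos : (0:ℝ) < (q:ℝ) + 1/2 := by linarith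
  have hn0 : 0 ≤ n := Int.floor_nonneg.mpr (Real.logb_nonneg one_lt_two hx1)
  constructor
  · -- membership
    refine ⟨B m n.toNat, ?_, ?_⟩
    · rw [rho_B hm]
      have h1 : ((n.toNat : ℝ)) ≤ Real.logb 2 ((q:ℝ) + 1/2) := by
        have he : ((n.toNat : ℕ) : ℝ) = (n : ℝ) := by exact_mod_cast Int.toNat_of_nonneg hn0
        rw [he]
        exact Int.floor_le _
      have h2 : (2:ℝ) ^ (n.toNat : ℝ) ≤ (q:ℝ) + 1/2 := by
        calc (2:ℝ) ^ (n.toNat : ℝ) ≤ (2:ℝ) ^ (Real.logb 2 ((q:ℝ) + 1/2)) :=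
              (Real.rpow_le_rpow_left_iff one_lt_two).mpr h1
          _ = (q:ℝ) + 1/2 := Real.rpow_logb (by norm_num) (by norm_num) hxpos
      rw [Real.rpow_natCast] at h2
      have h3 : (2:ℚ) ^ n.toNat ≤ q + 1/2 := by
        rw [show ((q:ℝ) + 1/2) = (((q + 1/2 : ℚ)) : ℝ) by push_cast; ring] at h2
        exact_mod_cast h2
      linarith
    · rw [dbl_B]
      omega
  · -- upper bound
    rintro k ⟨τ, hρ, rfl⟩
    have hkey := key τ
    have h1 : (2:ℚ) ^ dbl τ ≤ 2 * q + 1 := by linarith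
    have h1R : (2:ℝ) ^ dbl τ ≤ 2 * ((q:ℝ) + 1/2) := by
      have := h1
      have : ((2:ℚ) ^ dbl τ : ℝ) ≤ ((2 * q + 1 : ℚ) : ℝ) := by exact_mod_cast h1
      push_cast at this
      linarith
    have hd1 : 1 ≤ dbl τ := one_le_dbl τ
    have h2R : (2:ℝ) ^ (dbl τ - 1) ≤ (q:ℝ) + 1/2 := by
      have hpow : (2:ℝ) ^ dbl τ = 2 * (2:ℝ) ^ (dbl τ - 1) := by
        rw [← pow_succ']
        congr 1
        omega
      rw [hpow] at h1R
      linarith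
    have h3 : ((dbl τ : ℤ) - 1 : ℝ) ≤ Real.logb 2 ((q:ℝ) + 1/2) := by
      rw [Real.le_logb_iff_rpow_le one_lt_two hxpos]
      have : ((dbl τ : ℤ) - 1 : ℝ) = ((dbl τ - 1 : ℕ) : ℝ) := by
        push_cast [Nat.cast_sub hd1]
        ring
      rw [this, Real.rpow_natCast]
      exact h2R
    have h4 : (dbl τ : ℤ) - 1 ≤ n := by
      rw [hn, Int.le_floor]
      exact_mod_cast h3
    omega
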